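/- Let φ be a conformal immersion on an open set U ⊆ ℝ² with conformal factor λ, and let n := (φ_u × φ_v)/‖φ_u × φ_v‖ be the unit normal. Then at every point of U the Laplacian Δφ := φ_uu + φ_vv is parallel to n; precisely, Δφ = ⟨Δφ, n⟩ · n, and hence, with the mean curvature H := ⟨Δφ, n⟩/(2λ²), one has Δφ = 2λ²H n on U (which is the paper's formula H = (1/(2λ²)) sign(φ) |Δφ| with sign(φ) = ⟨Δφ, n⟩/|Δφ|). -/

import Mathlib

open Complex

noncomputable section

/-- Euclidean 3-space. -/
abbrev E3 : Type := EuclideanSpace ℝ (Fin 3)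

/-- Partial derivative in the first (u) coordinate direction. -/
def pu {F : Type} [NormedAddCommGroup F] [NormedSpace ℝ F]
    (f : ℝ × ℝ → F) (p : ℝ × ℝ) : F := fderiv ℝ f p (1, 0)

/-- Partial derivative in the second (v) coordinate direction. -/
def pv {F : Type} [NormedAddCommGroup F] [NormedSpace ℝ F]
    (f : ℝ × ℝ → F) (p : ℝ × ℝ) : F := fderiv ℝ f p (0, 1)

/-- Cross product on ℝ³. -/
def cross (a b : E3) : E3 :=
  (WithLp.equiv 2 (Fin 3 → ℝ)).symm
    ![a 1 * b 2 - a 2 * b 1, a 2 * b 0 - a 0 * b 2, a 0 * b 1 - a 1 * b 0]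

/-- The Euclidean inner product on ℝ³. -/
def ip (a b : E3) : ℝ := @inner ℝ _ _ a b

/-- `φ` is a smooth conformal immersion on the open set `U ⊆ ℝ²` with
(smooth, positive) conformal factor `lam`:  ⟨φ_u,φ_u⟩ = λ², ⟨φ_v,φ_v⟩ = λ²,
⟨φ_u,φ_v⟩ = 0 at every point of `U`. -/
def IsConfImm (U : Set (ℝ × ℝ)) (φ : ℝ × ℝ → E3) (lam : ℝ × ℝ → ℝ) : Prop :=
  IsOpen U ∧ ContDiffOn ℝ (⊤ : ℕ∞) φ U ∧ ContDiffOn ℝ (⊤ : ℕ∞) lam U ∧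
    ∀ p ∈ U, 0 < lam p ∧
      ip (pu φ p) (pu φ p) = (lam p) ^ 2 ∧
      ip (pv φ p) (pv φ p) = (lam p) ^ 2 ∧
      ip (pu φ p) (pv φ p) = 0

/-- Complexification ℝ³ ↪ ℂ³. -/
def toC (x : E3) : Fin 3 → ℂ := fun j => (x j : ℂ)

/-- Complex-bilinear dot product on ℂ³:  (a,b) = Σⱼ aⱼ bⱼ. -/
def cdot (a b : Fin 3 → ℂ) : ℂ := ∑ j, a j * b j

/-- ∂_z = ½(∂_u − i ∂_v) for maps into complex normed spaces. -/
def dz {F : Type} [NormedAddCommGroup F] [NormedSpace ℂ F]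
    (f : ℝ × ℝ → F) (p : ℝ × ℝ) : F :=
  (2 : ℂ)⁻¹ • (pu f p - Complex.I • pv f p)

/-- ∂_z̄ = ½(∂_u + i ∂_v) for maps into complex normed spaces. -/
def dzbar {F : Type} [NormedAddCommGroup F] [NormedSpace ℂ F]
    (f : ℝ × ℝ → F) (p : ℝ × ℝ) : F :=
  (2 : ℂ)⁻¹ • (pu f p + Complex.I • pv f p)

/-- `f_z := ½(f_u − i f_v) ∈ ℂ³` for a real-vector-valued map `f` (in particular `φ_z`). -/
def phiz (f : ℝ × ℝ → E3) (p : ℝ × ℝ) : Fin 3 → ℂ :=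
  (2 : ℂ)⁻¹ • (toC (pu f p) - Complex.I • toC (pv f p))

/-- `f_z̄ := ½(f_u + i f_v) ∈ ℂ³` for a real-vector-valued map `f` (in particular `φ_z̄`). -/
def phizbar (f : ℝ × ℝ → E3) (p : ℝ × ℝ) : Fin 3 → ℂ :=
  (2 : ℂ)⁻¹ • (toC (pu f p) + Complex.I • toC (pv f p))

/-- The unit normal n = (φ_u × φ_v)/‖φ_u × φ_v‖. -/
def nvec (φ : ℝ × ℝ → E3) (p : ℝ × ℝ) : E3 :=
  ‖cross (pu φ p) (pv φ p)‖⁻¹ • cross (pu φ p) (pv φ p)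

/-- Componentwise Laplacian Δ = ∂_uu + ∂_vv. -/
def lap {F : Type} [NormedAddCommGroup F] [NormedSpace ℝ F]
    (f : ℝ × ℝ → F) (p : ℝ × ℝ) : F := pu (pu f) p + pv (pv f) p

/-- Mean curvature H = ⟨Δφ, n⟩/(2λ²). -/
def mcurv (φ : ℝ × ℝ → E3) (lam : ℝ × ℝ → ℝ) (p : ℝ × ℝ) : ℝ :=
  ip (lap φ p) (nvec φ p) / (2 * (lam p) ^ 2)

/-- μ := (∂_z φ_z, n). -/
def muQ (φ : ℝ × ℝ → E3) (p : ℝ × ℝ) : ℂ :=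
  cdot (dz (phiz φ) p) (toC (nvec φ p))


set_option maxHeartbeats 1000000

lemma ip_expand' (a b : E3) : ip a b = a 0 * b 0 + a 1 * b 1 + a 2 * b 2 := by
  simp [ip, PiLp.inner_apply, RCLike.inner_apply, Fin.sum_univ_three]; ring

lemma cross_c0 (a b : E3) : cross a b 0 = a 1 * b 2 - a 2 * b 1 := by simp [cross]
lemma cross_c1 (a b : E3) : cross a b 1 = a 2 * b 0 - a 0 * b 2 := by simp [cross]
lemma cross_c2 (a b : E3) : cross a b 2 = a 0 * b 1 - a 1 * b 0 := by simp [cross]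

lemma key_algebra (a b w : E3) (l : ℝ) (hl : 0 < l)
    (haa : ip a a = l ^ 2) (hbb : ip b b = l ^ 2) (hab : ip a b = 0)
    (hwa : ip w a = 0) (hwb : ip w b = 0) :
    w = ip w (‖cross a b‖⁻¹ • cross a b) • (‖cross a b‖⁻¹ • cross a b) := by
  obtain ⟨c, hc⟩ : ∃ c, cross a b = c := ⟨_, rfl⟩
  rw [hc]
  rw [ip_expand'] at haa hbb hab hwa hwb
  have hc0 := cross_c0 a b; have hc1 := cross_c1 a b; have hc2 := cross_c2 a b
  rw [hc] at hc0 hc1 hc2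
  have hcc : ip c c = l ^ 4 := by
    rw [ip_expand', hc0, hc1, hc2]; nlinarith [haa, hbb, hab]
  have hnc : ‖c‖ = l ^ 2 := by
    have h1 : ‖c‖ ^ 2 = l ^ 4 := by rw [← hcc, ip, real_inner_self_eq_norm_sq]
    nlinarith [norm_nonneg c, sq_nonneg l]
  have hl2 : (0:ℝ) < l ^ 2 := by positivity
  have hkey : ∀ j : Fin 3, ip c c * w j = ip w c * c j := by
    intro j
    fin_cases j
    · show ip c c * w 0 = ip w c * c 0
      rw [ip_expand', ip_expand', hc0, hc1, hc2]
      linear_combination ((b 0 * b 0 + b 1 * b 1 + b 2 * b 2) * a 0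
          - (a 0 * b 0 + a 1 * b 1 + a 2 * b 2) * b 0) * hwa
        + ((a 0 * a 0 + a 1 * a 1 + a 2 * a 2) * b 0
          - (a 0 * b 0 + a 1 * b 1 + a 2 * b 2) * a 0) * hwb
    · show ip c c * w 1 = ip w c * c 1
      rw [ip_expand', ip_expand', hc0, hc1, hc2]
      linear_combination ((b 0 * b 0 + b 1 * b 1 + b 2 * b 2) * a 1
          - (a 0 * b 0 + a 1 * b 1 + a 2 * b 2) * b 1) * hwa
        + ((a 0 * a 0 + a 1 * a 1 + a 2 * a 2) * b 1
          - (a 0 * b 0 + a 1 * b 1 + a 2 * b 2) * a 1) * hwb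
    · show ip c c * w 2 = ip w c * c 2
      rw [ip_expand', ip_expand', hc0, hc1, hc2]
      linear_combination ((b 0 * b 0 + b 1 * b 1 + b 2 * b 2) * a 2
          - (a 0 * b 0 + a 1 * b 1 + a 2 * b 2) * b 2) * hwa
        + ((a 0 * a 0 + a 1 * a 1 + a 2 * a 2) * b 2
          - (a 0 * b 0 + a 1 * b 1 + a 2 * b 2) * a 2) * hwb
  have hip : ip w (‖c‖⁻¹ • c) = ‖c‖⁻¹ * ip w c := by
    rw [ip, ip, real_inner_smul_right]
  ext j
  have hj := hkey j
  rw [hcc] at hj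
  have : (ip w (‖c‖⁻¹ • c) • (‖c‖⁻¹ • c)) j = ‖c‖⁻¹ * ip w c * (‖c‖⁻¹ * c j) := by
    rw [hip, PiLp.smul_apply, PiLp.smul_apply, smul_eq_mul, smul_eq_mul]
  rw [this, hnc]
  field_simp
  linear_combination hj

lemma lap_orth (U : Set (ℝ × ℝ)) (φ : ℝ × ℝ → E3) (lam : ℝ × ℝ → ℝ)
    (h : IsConfImm U φ lam) (p : ℝ × ℝ) (hp : p ∈ U) :
    ip (lap φ p) (pu φ p) = 0 ∧ ip (lap φ p) (pv φ p) = 0 := by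
  obtain ⟨hU, hφ, hlam, hpt⟩ := h
  have hmem : U ∈ nhds p := hU.mem_nhds hp
  have hφat : ∀ q ∈ U, ContDiffAt ℝ (⊤ : ℕ∞) φ q := fun q hq =>
    hφ.contDiffAt (hU.mem_nhds hq)
  have htop : ((⊤ : ℕ∞) : WithTop ℕ∞) + 1 ≤ ((⊤ : ℕ∞) : WithTop ℕ∞) := by
    simp
  have hfd : ∀ q ∈ U, ContDiffAt ℝ (⊤ : ℕ∞) (fderiv ℝ φ) q := fun q hq =>
    (hφat q hq).fderiv_right htop
  have h1top : (1 : WithTop ℕ∞) ≤ ((⊤ : ℕ∞) : WithTop ℕ∞) := by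
    exact_mod_cast le_top
  have hA : ∀ q ∈ U, ContDiffAt ℝ (⊤ : ℕ∞) (pu φ) q := fun q hq =>
    (ContinuousLinearMap.apply ℝ E3 ((1:ℝ),(0:ℝ))).contDiff.comp_contDiffAt q (hfd q hq)
  have hB : ∀ q ∈ U, ContDiffAt ℝ (⊤ : ℕ∞) (pv φ) q := fun q hq =>
    (ContinuousLinearMap.apply ℝ E3 ((0:ℝ),(1:ℝ))).contDiff.comp_contDiffAt q (hfd q hq)
  have hA' : DifferentiableAt ℝ (pu φ) p := (hA p hp).differentiableAt (by simp)
  have hB' : DifferentiableAt ℝ (pv φ) p := (hB p hp).differentiableAt (by simp)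
  have hev : ∀ᶠ y in nhds p, HasFDerivAt φ (fderiv ℝ φ y) y := by
    filter_upwards [hmem] with q hq
    exact ((hφat q hq).differentiableAt (by simp)).hasFDerivAt
  have hx : HasFDerivAt (fderiv ℝ φ) (fderiv ℝ (fderiv ℝ φ) p) p :=
    (((hfd p hp)).differentiableAt (by simp)).hasFDerivAt
  have hsym := second_derivative_symmetric_of_eventually hev hx ((1:ℝ),(0:ℝ)) ((0:ℝ),(1:ℝ))
  have hpvpu : pv (pu φ) p = fderiv ℝ (fderiv ℝ φ) p (0,1) (1,0) := by
    have : HasFDerivAt (pu φ)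
        ((ContinuousLinearMap.apply ℝ E3 ((1:ℝ),(0:ℝ))).comp (fderiv ℝ (fderiv ℝ φ) p)) p :=
      (ContinuousLinearMap.apply ℝ E3 ((1:ℝ),(0:ℝ))).hasFDerivAt.comp p hx
    rw [pv, this.fderiv]; rfl
  have hpupv : pu (pv φ) p = fderiv ℝ (fderiv ℝ φ) p (1,0) (0,1) := by
    have : HasFDerivAt (pv φ)
        ((ContinuousLinearMap.apply ℝ E3 ((0:ℝ),(1:ℝ))).comp (fderiv ℝ (fderiv ℝ φ) p)) p :=
      (ContinuousLinearMap.apply ℝ E3 ((0:ℝ),(1:ℝ))).hasFDerivAt.comp p hx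
    rw [pu, this.fderiv]; rfl
  have hs : pv (pu φ) p = pu (pv φ) p := by rw [hpvpu, hpupv, ← hsym]
  have hEG : (fun q => @inner ℝ _ _ (pu φ q) (pu φ q)) =ᶠ[nhds p]
      (fun q => @inner ℝ _ _ (pv φ q) (pv φ q)) := by
    filter_upwards [hmem] with q hq
    have h2 := (hpt q hq).2.1
    have h3 := (hpt q hq).2.2.1
    rw [ip] at h2 h3
    simp only [h2, h3]
  have hF : (fun q => @inner ℝ _ _ (pu φ q) (pv φ q)) =ᶠ[nhds p]
      (fun _ => (0:ℝ)) := by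
    filter_upwards [hmem] with q hq
    exact (hpt q hq).2.2.2
  have hEGd : fderiv ℝ (fun q => @inner ℝ _ _ (pu φ q) (pu φ q)) p
      = fderiv ℝ (fun q => @inner ℝ _ _ (pv φ q) (pv φ q)) p := hEG.fderiv_eq
  have hFd : fderiv ℝ (fun q => @inner ℝ _ _ (pu φ q) (pv φ q)) p = 0 := by
    rw [hF.fderiv_eq]; exact fderiv_const_apply 0
  have eE : ∀ y : ℝ × ℝ, fderiv ℝ (fun q => @inner ℝ _ _ (pu φ q) (pu φ q)) p y
      = @inner ℝ _ _ (pu φ p) (fderiv ℝ (pu φ) p y) + @inner ℝ _ _ (fderiv ℝ (pu φ) p y) (pu φ p) :=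
    fun y => fderiv_inner_apply ℝ hA' hA' y
  have eG : ∀ y : ℝ × ℝ, fderiv ℝ (fun q => @inner ℝ _ _ (pv φ q) (pv φ q)) p y
      = @inner ℝ _ _ (pv φ p) (fderiv ℝ (pv φ) p y) + @inner ℝ _ _ (fderiv ℝ (pv φ) p y) (pv φ p) :=
    fun y => fderiv_inner_apply ℝ hB' hB' y
  have eF : ∀ y : ℝ × ℝ, fderiv ℝ (fun q => @inner ℝ _ _ (pu φ q) (pv φ q)) p y
      = @inner ℝ _ _ (pu φ p) (fderiv ℝ (pv φ) p y) + @inner ℝ _ _ (fderiv ℝ (pu φ) p y) (pv φ p) :=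
    fun y => fderiv_inner_apply ℝ hA' hB' y
  have c1 : @inner ℝ _ _ (pu φ p) (pu (pu φ) p) + @inner ℝ _ _ (pu (pu φ) p) (pu φ p)
      = @inner ℝ _ _ (pv φ p) (pu (pv φ) p) + @inner ℝ _ _ (pu (pv φ) p) (pv φ p) := by
    have h0 := DFunLike.congr_fun hEGd ((1:ℝ),(0:ℝ))
    rw [eE, eG] at h0
    exact h0
  have c2 : @inner ℝ _ _ (pu φ p) (pv (pu φ) p) + @inner ℝ _ _ (pv (pu φ) p) (pu φ p)
      = @inner ℝ _ _ (pv φ p) (pv (pv φ) p) + @inner ℝ _ _ (pv (pv φ) p) (pv φ p) := by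
    have h0 := DFunLike.congr_fun hEGd ((0:ℝ),(1:ℝ))
    rw [eE, eG] at h0
    exact h0
  have c3 : @inner ℝ _ _ (pu φ p) (pu (pv φ) p) + @inner ℝ _ _ (pu (pu φ) p) (pv φ p) = 0 := by
    have h0 := DFunLike.congr_fun hFd ((1:ℝ),(0:ℝ))
    rw [eF] at h0
    simpa [pu, pv] using h0
  have c4 : @inner ℝ _ _ (pu φ p) (pv (pv φ) p) + @inner ℝ _ _ (pv (pu φ) p) (pv φ p) = 0 := by
    have h0 := DFunLike.congr_fun hFd ((0:ℝ),(1:ℝ))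
    rw [eF] at h0
    simpa [pu, pv] using h0
  rw [hs] at c2 c4
  have r1 := real_inner_comm (pu φ p) (pu (pu φ) p)
  have r2 := real_inner_comm (pv φ p) (pu (pv φ) p)
  have r3 := real_inner_comm (pu φ p) (pu (pv φ) p)
  have r4 := real_inner_comm (pv φ p) (pv (pv φ) p)
  have r5 := real_inner_comm (pu φ p) (pv (pv φ) p)
  constructor
  · show @inner ℝ _ _ (pu (pu φ) p + pv (pv φ) p) (pu φ p) = 0
    rw [inner_add_left]
    linarith [c1, c2, c3, c4, r1, r2, r3, r4, r5]
  · show @inner ℝ _ _ (pu (pu φ) p + pv (pv φ) p) (pv φ p) = 0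
    rw [inner_add_left]
    linarith [c1, c2, c3, c4, r1, r2, r3, r4, r5]

/-- Δφ is parallel to the unit normal; Δφ = ⟨Δφ, n⟩ n = 2λ²H n. -/
theorem conformal_laplacian_parallel_to_normal
    (U : Set (ℝ × ℝ)) (φ : ℝ × ℝ → E3) (lam : ℝ × ℝ → ℝ)
    (h : IsConfImm U φ lam) :
    ∀ p ∈ U,
      lap φ p = ip (lap φ p) (nvec φ p) • nvec φ p ∧
      lap φ p = (2 * (lam p) ^ 2 * mcurv φ lam p) • nvec φ p :=  by
  intro p hp
  have horth := lap_orth U φ lam h p hp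
  obtain ⟨hl, haa, hbb, hab⟩ := h.2.2.2 p hp
  have key := key_algebra (pu φ p) (pv φ p) (lap φ p) (lam p) hl haa hbb hab horth.1 horth.2
  have h1 : lap φ p = ip (lap φ p) (nvec φ p) • nvec φ p := by rw [nvec]; exact key
  refine ⟨h1, ?_⟩
  have h2 : 2 * (lam p) ^ 2 * mcurv φ lam p = ip (lap φ p) (nvec φ p) := by
    rw [mcurv]; field_simp
  rw [h2]; exact h1
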